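/- If |X| = ∞ (countably infinite alphabet), β ∈ (0,1], and P = {(P₀, P_b) : TV(P₀, P_b) ≥ 1-β}, then any Type-2 backdoor detector with access to (D, P₀) that is α-error must have α = ½; i.e., no detector can beat random guessing uniformly over P. -/

import Mathlib

set_option maxHeartbeats 2000000

open MeasureTheory
open scoped ENNReal

/-- Total variation distance between two PMFs on a countable alphabet. -/
noncomputable def tvPMF {X : Type*} (P Q : PMF X) : ℝ :=
  (∑' x, |(P x).toReal - (Q x).toReal|) / 2


lemma natIneq (K M : ℕ) (hMK : M ≤ K) :
    ∀ t, t ≤ M → Nat.choose K M * Nat.descFactorial M t ≤ K ^ t * Nat.choose (K - t) (M - t) := by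
  intro t
  induction t with
  | zero => simp
  | succ t ih =>
    intro ht
    have ht' : t ≤ M := Nat.le_of_succ_le ht
    have htM : t < M := ht
    have htK : t < K := lt_of_lt_of_le htM hMK
    set a := K - t - 1 with ha
    set b := M - t - 1 with hb
    have hKt : K - t = a + 1 := by omega
    have hMt : M - t = b + 1 := by omega
    have hKt1 : K - (t + 1) = a := by omega
    have hMt1 : M - (t + 1) = b := by omega
    have hid : (a + 1) * Nat.choose a b = Nat.choose (a + 1) (b + 1) * (b + 1) :=
      Nat.add_one_mul_choose_eq a b
    calc Nat.choose K M * Nat.descFactorial M (t + 1)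
        = (M - t) * (Nat.choose K M * Nat.descFactorial M t) := by
          rw [Nat.descFactorial_succ]; ring
      _ ≤ (M - t) * (K ^ t * Nat.choose (K - t) (M - t)) :=
          Nat.mul_le_mul_left _ (ih ht')
      _ = K ^ t * (Nat.choose (a + 1) (b + 1) * (b + 1)) := by rw [hKt, hMt]; ring
      _ = K ^ t * ((a + 1) * Nat.choose a b) := by rw [hid]
      _ ≤ K ^ t * (K * Nat.choose a b) := by
          have : a + 1 ≤ K := by omega
          exact Nat.mul_le_mul_left _ (Nat.mul_le_mul_right _ this)
      _ = K ^ (t + 1) * Nat.choose (K - (t + 1)) (M - (t + 1)) := by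
          rw [hKt1, hMt1]; ring

lemma descFac_lb (M : ℕ) (hM : 0 < M) :
    ∀ t, t ≤ M → ((M : ℝ))^t * (1 - (t:ℝ)^2 / M) ≤ (Nat.descFactorial M t : ℝ) := by
  have hMR : (0:ℝ) < M := by exact_mod_cast hM
  intro t
  induction t with
  | zero => simp
  | succ t ih =>
    intro ht
    have ht' : t ≤ M := Nat.le_of_succ_le ht
    have h1 : ((M - t : ℕ) : ℝ) = (M:ℝ) - t := by
      have : t ≤ M := ht'; push_cast [this]; ring
    have hMt : (0:ℝ) ≤ (M:ℝ) - t := by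
      have : (t:ℝ) ≤ M := by exact_mod_cast ht'
      linarith
    have key : ((M:ℝ))^(t+1) * (1 - ((t+1:ℕ):ℝ)^2 / M) ≤ ((M:ℝ) - t) * (((M:ℝ))^t * (1 - (t:ℝ)^2 / M)) := by
      have hpow : (0:ℝ) < (M:ℝ)^t := pow_pos hMR t
      have e1 : ((M:ℝ))^(t+1) = (M:ℝ)^t * M := by ring
      rw [← mul_le_mul_iff_left₀ hMR]
      push_cast
      field_simp
      ring_nf
      nlinarith [mul_nonneg (mul_nonneg hpow.le hMt) (sq_nonneg (t:ℝ)),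
        mul_nonneg hpow.le (mul_nonneg (le_of_lt hMR) hMt),
        mul_nonneg (mul_nonneg hpow.le hMR.le) (sq_nonneg (t:ℝ)), hpow.le,
        mul_nonneg hpow.le (sq_nonneg ((t:ℝ)))]
    calc ((M:ℝ))^(t+1) * (1 - ((t+1:ℕ):ℝ)^2 / M)
        ≤ ((M:ℝ) - t) * (((M:ℝ))^t * (1 - (t:ℝ)^2 / M)) := key
      _ ≤ ((M:ℝ) - t) * (Nat.descFactorial M t : ℝ) := by
          exact mul_le_mul_of_nonneg_left (ih ht') hMt
      _ = (Nat.descFactorial M (t+1) : ℝ) := by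
          rw [Nat.descFactorial_succ]; push_cast [h1]; ring


lemma count_subsets {X : Type*} [DecidableEq X] (base : Finset X) (M : ℕ) (T : Finset X)
    (hT : T ⊆ base) (htM : T.card ≤ M) :
    ((base.powersetCard M).filter (fun S => T ⊆ S)).card
      = Nat.choose (base.card - T.card) (M - T.card) := by
  rw [show base.card - T.card = (base \ T).card from (Finset.card_sdiff_of_subset hT).symm,
    ← Finset.card_powersetCard]
  apply Finset.card_bij' (fun S _ => S \ T) (fun S' _ => S' ∪ T)
  · intro S hS
    simp only [Finset.mem_filter, Finset.mem_powersetCard] at hS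
    obtain ⟨⟨hSb, hScard⟩, hTS⟩ := hS
    simp only [Finset.mem_powersetCard]
    constructor
    · exact Finset.sdiff_subset_sdiff hSb (Finset.Subset.refl T)
    · rw [Finset.card_sdiff_of_subset hTS, hScard]
  · intro S' hS'
    simp only [Finset.mem_powersetCard] at hS'
    obtain ⟨hS'b, hS'card⟩ := hS'
    have hdisj : Disjoint S' T := by
      refine Finset.disjoint_left.2 fun a ha hat => ?_
      have := hS'b ha
      simp [Finset.mem_sdiff] at this
      exact this.2 hat
    simp only [Finset.mem_filter, Finset.mem_powersetCard]
    refine ⟨⟨?_, ?_⟩, Finset.subset_union_right⟩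
    · exact Finset.union_subset (fun a ha => (Finset.mem_sdiff.1 (hS'b ha)).1) hT
    · rw [Finset.card_union_of_disjoint hdisj, hS'card]
      omega
  · intro S hS
    simp only [Finset.mem_filter] at hS
    exact Finset.sdiff_union_of_subset hS.2
  · intro S' hS'
    simp only [Finset.mem_powersetCard] at hS'
    have hdisj : Disjoint S' T := by
      refine Finset.disjoint_left.2 fun a ha hat => ?_
      have := hS'.1 ha
      simp [Finset.mem_sdiff] at this
      exact this.2 hat
    exact Finset.union_sdiff_cancel_right hdisj

lemma scalarIneq (K M N t : ℕ) (ht : t ≤ N) (hNM : N * N < M) (hMK : M ≤ K) :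
    ENNReal.ofReal (1 - (N:ℝ)^2 / M) * (Nat.choose K M : ℝ≥0∞) * ((K : ℝ≥0∞))⁻¹ ^ t
      ≤ ((M : ℝ≥0∞))⁻¹ ^ t * (Nat.choose (K - t) (M - t) : ℝ≥0∞) := by
  have hM : 0 < M := lt_of_le_of_lt (Nat.zero_le _) hNM
  have hK : 0 < K := lt_of_lt_of_le hM hMK
  have hMR : (0:ℝ) < M := by exact_mod_cast hM
  have hKR : (0:ℝ) < K := by exact_mod_cast hK
  have hNM' : N ≤ M := by nlinarith [Nat.le_of_lt hNM]
  have htM : t ≤ M := le_trans ht hNM'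
  have hNMR : (N:ℝ)^2 < M := by
    have : ((N*N : ℕ):ℝ) < M := by exact_mod_cast hNM
    push_cast at this; nlinarith
  have h1nn : (0:ℝ) ≤ 1 - (N:ℝ)^2 / M := by
    rw [sub_nonneg, div_le_one hMR]; linarith
  have htnn : (0:ℝ) ≤ 1 - (t:ℝ)^2 / M := by
    rw [sub_nonneg, div_le_one hMR]
    have : (t:ℝ) ≤ N := by exact_mod_cast ht
    nlinarith [Nat.cast_nonneg (α := ℝ) t]
  have hreal : (1 - (N:ℝ)^2 / M) * (Nat.choose K M : ℝ) * ((K:ℝ))⁻¹ ^ t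
      ≤ ((M:ℝ))⁻¹ ^ t * (Nat.choose (K - t) (M - t) : ℝ) := by
    have hA := descFac_lb M hM t htM
    have hBR : (Nat.choose K M : ℝ) * (Nat.descFactorial M t : ℝ)
        ≤ (K:ℝ)^t * (Nat.choose (K - t) (M - t) : ℝ) := by
      exact_mod_cast natIneq K M hMK t htM
    have hmono : (1 - (N:ℝ)^2 / M) ≤ (1 - (t:ℝ)^2 / M) := by
      have h1 : (t:ℝ) ≤ N := by exact_mod_cast ht
      have h2 : (t:ℝ)^2 ≤ (N:ℝ)^2 := by nlinarith [Nat.cast_nonneg (α := ℝ) t]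
      have h3 : (t:ℝ)^2 / M ≤ (N:ℝ)^2 / M := by gcongr
      linarith
    have hCnn : (0:ℝ) ≤ (Nat.choose K M : ℝ) := Nat.cast_nonneg _
    have h2 : (1 - (t:ℝ)^2 / M) * (Nat.choose K M : ℝ) * (M:ℝ)^t
        ≤ (Nat.choose (K - t) (M - t) : ℝ) * (K:ℝ)^t := by
      have := mul_le_mul_of_nonneg_left hA hCnn
      nlinarith [this, hBR]
    have hfin : (1 - (t:ℝ)^2 / M) * (Nat.choose K M : ℝ) * ((K:ℝ))⁻¹ ^ t
        ≤ ((M:ℝ))⁻¹ ^ t * (Nat.choose (K - t) (M - t) : ℝ) := by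
      rw [inv_pow, inv_pow, ← div_eq_mul_inv, mul_comm ((M:ℝ)^t)⁻¹, ← div_eq_mul_inv,
        div_le_div_iff₀ (pow_pos hKR t) (pow_pos hMR t)]
      nlinarith [h2]
    calc (1 - (N:ℝ)^2 / M) * (Nat.choose K M : ℝ) * ((K:ℝ))⁻¹ ^ t
        ≤ (1 - (t:ℝ)^2 / M) * (Nat.choose K M : ℝ) * ((K:ℝ))⁻¹ ^ t := by
          have : (0:ℝ) ≤ (Nat.choose K M : ℝ) * ((K:ℝ))⁻¹ ^ t := by positivity
          nlinarith [this, hmono]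
      _ ≤ _ := hfin
  have e1 : ENNReal.ofReal ((1 - (N:ℝ)^2 / M) * (Nat.choose K M : ℝ) * ((K:ℝ))⁻¹ ^ t)
      = ENNReal.ofReal (1 - (N:ℝ)^2 / M) * (Nat.choose K M : ℝ≥0∞) * ((K : ℝ≥0∞))⁻¹ ^ t := by
    rw [ENNReal.ofReal_mul (by positivity), ENNReal.ofReal_mul h1nn, ENNReal.ofReal_natCast,
      ENNReal.ofReal_pow (by positivity), ENNReal.ofReal_inv_of_pos hKR, ENNReal.ofReal_natCast]
  have e2 : ENNReal.ofReal (((M:ℝ))⁻¹ ^ t * (Nat.choose (K - t) (M - t) : ℝ))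
      = ((M : ℝ≥0∞))⁻¹ ^ t * (Nat.choose (K - t) (M - t) : ℝ≥0∞) := by
    rw [ENNReal.ofReal_mul (by positivity), ENNReal.ofReal_pow (by positivity),
      ENNReal.ofReal_inv_of_pos hMR, ENNReal.ofReal_natCast, ENNReal.ofReal_natCast]
  rw [← e1, ← e2]
  exact ENNReal.ofReal_le_ofReal hreal

lemma slice_ge {ι Ω : Type*} [Countable ι] [MeasurableSpace ι] [MeasurableSingletonClass ι]
    [MeasurableSpace Ω] (ν : Measure ι) (μ : Measure Ω) [SFinite μ] (B : ι → Set Ω) :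
    ∑' x, ν {x} * μ (B x) ≤ (ν.prod μ) (⋃ x, ({x} : Set ι) ×ˢ B x) := by
  classical
  rw [ENNReal.tsum_eq_iSup_sum]
  refine iSup_le fun F => ?_
  have key : ∀ F : Finset ι,
      ∑ x ∈ F, ν {x} * μ (B x) ≤ (ν.prod μ) (⋃ x ∈ F, (({x} : Set ι) ×ˢ B x)) := by
    intro F
    induction F using Finset.induction_on with
    | empty => simp
    | @insert a s hna ih =>
      have hslab : MeasurableSet (({a} : Set ι) ×ˢ (Set.univ : Set Ω)) :=
        (measurableSet_singleton a).prod MeasurableSet.univ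
      set U := ⋃ x ∈ insert a s, (({x} : Set ι) ×ˢ B x) with hU
      have hsplit := measure_inter_add_diff (μ := ν.prod μ) U hslab
      have h1 : ({a} : Set ι) ×ˢ B a ⊆ U ∩ (({a} : Set ι) ×ˢ (Set.univ : Set Ω)) := by
        refine Set.subset_inter ?_ (Set.prod_mono (le_refl _) (Set.subset_univ _))
        intro p hp
        exact Set.mem_biUnion (Finset.mem_insert_self a s) hp
      have h2 : (⋃ x ∈ s, (({x} : Set ι) ×ˢ B x)) ⊆ U \ (({a} : Set ι) ×ˢ (Set.univ : Set Ω)) := by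
        intro p hp
        simp only [Set.mem_iUnion, Set.mem_prod, Set.mem_singleton_iff] at hp
        obtain ⟨x, hxs, hpx, hpB⟩ := hp
        constructor
        · simp only [hU, Set.mem_iUnion, Set.mem_prod, Set.mem_singleton_iff]
          exact ⟨x, Finset.mem_insert_of_mem hxs, hpx, hpB⟩
        · simp only [Set.mem_prod, Set.mem_singleton_iff, not_and]
          intro h
          exact absurd (h ▸ hpx ▸ rfl : p.1 = a) (by rw [hpx]; intro he; exact hna (he ▸ hxs))
      calc ∑ x ∈ insert a s, ν {x} * μ (B x)
          = ν {a} * μ (B a) + ∑ x ∈ s, ν {x} * μ (B x) := Finset.sum_insert hna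
        _ ≤ (ν.prod μ) (U ∩ (({a} : Set ι) ×ˢ (Set.univ : Set Ω)))
            + (ν.prod μ) (U \ (({a} : Set ι) ×ˢ (Set.univ : Set Ω))) := by
            gcongr
            · calc ν {a} * μ (B a) = (ν.prod μ) (({a} : Set ι) ×ˢ B a) :=
                  (Measure.prod_prod _ _).symm
                _ ≤ _ := measure_mono h1
            · exact le_trans ih (measure_mono h2)
        _ = (ν.prod μ) U := hsplit
  exact (key F).trans (measure_mono (Set.iUnion₂_subset fun x _ => Set.subset_iUnion (fun y => ({y} : Set ι) ×ˢ B y) x))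

lemma slice_le {ι Ω : Type*} [Countable ι] [MeasurableSpace ι] [MeasurableSingletonClass ι]
    [MeasurableSpace Ω] (ν : Measure ι) (μ : Measure Ω) [SFinite μ] (B : ι → Set Ω) :
    (ν.prod μ) (⋃ x, ({x} : Set ι) ×ˢ B x) ≤ ∑' x, ν {x} * μ (B x) := by
  refine (measure_iUnion_le _).trans (le_of_eq (tsum_congr fun x => ?_))
  exact Measure.prod_prod _ _

lemma collision_bound {X : Type*} [Countable X] [MeasurableSpace X] [MeasurableSingletonClass X]
    (N : ℕ) (P : PMF X) (c : ℝ≥0∞) (hc : ∀ v, P v ≤ c) :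
    (Measure.pi fun _ : Fin N => P.toMeasure) {x | ¬ Function.Injective x}
      ≤ (N : ℝ≥0∞) * N * c := by
  set ν := Measure.pi fun _ : Fin N => P.toMeasure with hν
  have hsub : {x : Fin N → X | ¬ Function.Injective x} ⊆
      ⋃ p : Fin N × Fin N, {x : Fin N → X | p.1 ≠ p.2 ∧ x p.1 = x p.2} := by
    intro x hx
    simp only [Set.mem_setOf_eq] at hx
    rw [Function.not_injective_iff] at hx
    obtain ⟨i, j, hxij, hij⟩ := hx
    exact Set.mem_iUnion.2 ⟨(i, j), hij, hxij⟩
  refine (measure_mono hsub).trans ((measure_iUnion_le _).trans ?_)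
  have hone : ∀ p : Fin N × Fin N, ν {x | p.1 ≠ p.2 ∧ x p.1 = x p.2} ≤ c := by
    rintro ⟨i, j⟩
    by_cases hij : i = j
    · have : {x : Fin N → X | (i, j).1 ≠ (i, j).2 ∧ x (i, j).1 = x (i, j).2} = ∅ := by
        ext x; simp [hij]
      rw [this, measure_empty]; exact zero_le
    · have hsub2 : {x : Fin N → X | (i, j).1 ≠ (i, j).2 ∧ x (i, j).1 = x (i, j).2} ⊆
          ⋃ v : X, Set.pi Set.univ
            (fun k => if k = i then {v} else if k = j then ({v} : Set X) else Set.univ) := by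
        intro x hx
        refine Set.mem_iUnion.2 ⟨x i, fun k _ => ?_⟩
        by_cases h1 : k = i
        · simp [h1]
        · by_cases h2 : k = j
          · subst h2; simp [h1, hx.2.symm]
          · simp [h1, h2]
      refine (measure_mono hsub2).trans ((measure_iUnion_le _).trans ?_)
      have heach : ∀ v : X, ν (Set.pi Set.univ
          (fun k => if k = i then {v} else if k = j then ({v} : Set X) else Set.univ))
          = P v * P v := by
        intro v
        rw [hν, Measure.pi_pi]
        have hf : ∀ k : Fin N, P.toMeasure (if k = i then {v} else if k = j then ({v} : Set X) else Set.univ)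
            = if k = i then P v else if k = j then P v else 1 := by
          intro k
          split_ifs with h1 h2
          · exact PMF.toMeasure_apply_singleton _ _ (measurableSet_singleton v)
          · exact PMF.toMeasure_apply_singleton _ _ (measurableSet_singleton v)
          · exact measure_univ
        simp_rw [hf]
        rw [← Finset.mul_prod_erase _ _ (Finset.mem_univ i), if_pos rfl]
        have hj : j ∈ Finset.univ.erase i := Finset.mem_erase.2 ⟨fun h => hij h.symm, Finset.mem_univ j⟩
        rw [← Finset.mul_prod_erase _ _ hj, if_neg (fun h => hij h.symm), if_pos rfl]
        have : ∀ k ∈ (Finset.univ.erase i).erase j,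
            (if k = i then P v else if k = j then P v else 1) = 1 := by
          intro k hk
          have hk1 := Finset.mem_erase.1 hk
          have hk2 := Finset.mem_erase.1 hk1.2
          simp [hk1.1, hk2.1]
        rw [Finset.prod_congr rfl this, Finset.prod_const_one, mul_one]
      calc ∑' v : X, ν (Set.pi Set.univ
            (fun k => if k = i then {v} else if k = j then ({v} : Set X) else Set.univ))
          = ∑' v : X, P v * P v := tsum_congr heach
        _ ≤ ∑' v : X, c * P v := ENNReal.tsum_le_tsum fun v => mul_le_mul_left (hc v) _
        _ = c * ∑' v : X, P v := ENNReal.tsum_mul_left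
        _ = c := by rw [PMF.tsum_coe, mul_one]
  calc ∑' p : Fin N × Fin N, ν {x | p.1 ≠ p.2 ∧ x p.1 = x p.2}
      ≤ ∑' _p : Fin N × Fin N, c := ENNReal.tsum_le_tsum hone
    _ = (Fintype.card (Fin N × Fin N)) * c := by
        rw [tsum_fintype]; simp [Finset.sum_const, nsmul_eq_mul]
    _ = (N : ℝ≥0∞) * N * c := by
        simp [Fintype.card_prod, Fintype.card_fin]

lemma tv_unif {X : Type*} [DecidableEq X] (base S : Finset X) (hS : S ⊆ base) (hSne : S.Nonempty)
    (hbne : base.Nonempty) :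
    tvPMF (PMF.uniformOfFinset base hbne) (PMF.uniformOfFinset S hSne)
      = 1 - (S.card : ℝ) / (base.card : ℝ) := by
  set K := base.card with hK
  set M := S.card with hM
  have hK0 : 0 < K := Finset.card_pos.2 hbne
  have hM0 : 0 < M := Finset.card_pos.2 hSne
  have hMK : M ≤ K := Finset.card_le_card hS
  have hKR : (0:ℝ) < K := by exact_mod_cast hK0
  have hMR : (0:ℝ) < M := by exact_mod_cast hM0
  set F : X → ℝ := fun x =>
    |((PMF.uniformOfFinset base hbne) x).toReal - ((PMF.uniformOfFinset S hSne) x).toReal| with hF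
  have hzero : ∀ x ∉ base, F x = 0 := by
    intro x hx
    have hxS : x ∉ S := fun h => hx (hS h)
    simp [hF, PMF.uniformOfFinset_apply, hx, hxS]
  have hsum : ∑' x, F x = ∑ x ∈ base, F x := tsum_eq_sum hzero
  have hFS : ∀ x ∈ S, F x = (M:ℝ)⁻¹ - (K:ℝ)⁻¹ := by
    intro x hx
    have hxb : x ∈ base := hS hx
    simp only [hF, PMF.uniformOfFinset_apply, hxb, hx, if_true]
    rw [ENNReal.toReal_inv, ENNReal.toReal_inv]
    simp only [ENNReal.toReal_natCast]
    rw [abs_of_nonpos (by rw [sub_nonpos]; exact inv_anti₀ hMR (by exact_mod_cast hMK))]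
    ring
  have hFBS : ∀ x ∈ base \ S, F x = (K:ℝ)⁻¹ := by
    intro x hx
    obtain ⟨hxb, hxS⟩ := Finset.mem_sdiff.1 hx
    simp only [hF, PMF.uniformOfFinset_apply, hxb, hxS, if_true, if_false]
    rw [ENNReal.toReal_inv]
    simp only [ENNReal.toReal_natCast, ENNReal.toReal_zero, sub_zero, ← hK]
    have h0 : (0:ℝ) ≤ ((K:ℝ))⁻¹ := by positivity
    rw [abs_of_nonneg h0]
  have hsplit : ∑ x ∈ base, F x = ∑ x ∈ base \ S, F x + ∑ x ∈ S, F x :=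
    (Finset.sum_sdiff hS).symm
  have hcard : ((base \ S).card : ℝ) = (K:ℝ) - M := by
    rw [Finset.card_sdiff_of_subset hS, ← hK, ← hM]
    push_cast [hMK]
    ring
  have : ∑ x ∈ base, F x = 2 * (1 - (M:ℝ)/K) := by
    rw [hsplit, Finset.sum_congr rfl hFBS, Finset.sum_congr rfl hFS,
      Finset.sum_const, Finset.sum_const, nsmul_eq_mul, nsmul_eq_mul, hcard]
    field_simp
    ring
  rw [tvPMF, hsum, this]
  ring

lemma key_sum {X : Type*} [DecidableEq X] (γ : ℝ) (hγ0 : 0 ≤ γ) (hγ1 : γ ≤ 1)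
    (base : Finset X) (M N : ℕ) (hNM : N * N < M) (hMK : M ≤ base.card)
    (x : Fin N → X) (hinj : Function.Injective x) (hxb : ∀ i, x i ∈ base) :
    ENNReal.ofReal (1 - (N:ℝ)^2 / M) * ((base.card.choose M : ℕ) : ℝ≥0∞)
        * ((base.card : ℝ≥0∞))⁻¹ ^ N
      ≤ ∑ S ∈ (base.powersetCard M).attach,
          ∏ i : Fin N, (ENNReal.ofReal γ * (if x i ∈ S.1 then ((M:ℝ≥0∞))⁻¹ else 0)
            + ENNReal.ofReal (1 - γ) * ((base.card : ℝ≥0∞))⁻¹) := by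
  classical
  set K := base.card with hKdef
  set a : ℝ≥0∞ := ENNReal.ofReal γ with ha
  set b : ℝ≥0∞ := ENNReal.ofReal (1 - γ) with hb
  set Ki : ℝ≥0∞ := ((K : ℝ≥0∞))⁻¹ with hKi
  set Mi : ℝ≥0∞ := ((M : ℝ≥0∞))⁻¹ with hMi
  have hab : a + b = 1 := by
    rw [ha, hb, ← ENNReal.ofReal_add hγ0 (by linarith), ← ENNReal.ofReal_one]
    norm_num
  -- RHS expansion
  have hexp : ∀ S : Finset X,
      (∏ i : Fin N, (a * (if x i ∈ S then Mi else 0) + b * Ki))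
        = ∑ T ∈ (Finset.univ : Finset (Fin N)).powerset,
            (a * Mi) ^ T.card * (if T.image x ⊆ S then 1 else 0) * (b * Ki) ^ (N - T.card) := by
    intro S
    rw [Finset.prod_add]
    refine Finset.sum_congr rfl fun T hT => ?_
    have h1 : (∏ i ∈ T, (a * (if x i ∈ S then Mi else 0)))
        = (a * Mi) ^ T.card * (if T.image x ⊆ S then 1 else 0) := by
      have : ∀ i, a * (if x i ∈ S then Mi else 0) = (a * Mi) * (if x i ∈ S then 1 else 0) := by
        intro i; by_cases h : x i ∈ S <;> simp [h]
      simp_rw [this]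
      rw [Finset.prod_mul_distrib, Finset.prod_const, Finset.prod_boole]
      congr 2
      simp [Finset.image_subset_iff]
    have h2 : (∏ _i ∈ Finset.univ \ T, (b * Ki)) = (b * Ki) ^ (N - T.card) := by
      rw [Finset.prod_const, Finset.card_sdiff_of_subset (Finset.subset_univ T), Finset.card_univ,
        Fintype.card_fin]
    rw [h1, h2]
  -- LHS expansion
  have hlhs : Ki ^ N = ∑ T ∈ (Finset.univ : Finset (Fin N)).powerset,
      (a * Ki) ^ T.card * (b * Ki) ^ (N - T.card) := by
    have : Ki ^ N = ∏ _i : Fin N, (a * Ki + b * Ki) := by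
      rw [← add_mul, hab, one_mul, Finset.prod_const, Finset.card_univ, Fintype.card_fin]
    rw [this, Finset.prod_add]
    refine Finset.sum_congr rfl fun T hT => ?_
    rw [Finset.prod_const, Finset.prod_const, Finset.card_sdiff_of_subset (Finset.subset_univ T),
      Finset.card_univ, Fintype.card_fin]
  -- swap sums on RHS
  have hRHS : (∑ S ∈ (base.powersetCard M).attach,
      ∏ i : Fin N, (a * (if x i ∈ S.1 then Mi else 0) + b * Ki))
      = ∑ T ∈ (Finset.univ : Finset (Fin N)).powerset,
          (a * Mi) ^ T.card * ((K - T.card).choose (M - T.card) : ℝ≥0∞) * (b * Ki) ^ (N - T.card) := by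
    have : (∑ S ∈ (base.powersetCard M).attach,
        ∏ i : Fin N, (a * (if x i ∈ S.1 then Mi else 0) + b * Ki))
        = ∑ S ∈ base.powersetCard M,
        ∏ i : Fin N, (a * (if x i ∈ S then Mi else 0) + b * Ki) := by
      rw [← Finset.sum_attach (base.powersetCard M)
        (fun S => ∏ i : Fin N, (a * (if x i ∈ S then Mi else 0) + b * Ki))]
    rw [this]
    simp_rw [hexp]
    rw [Finset.sum_comm]
    refine Finset.sum_congr rfl fun T hT => ?_
    have hTcard : T.card ≤ N := by
      simpa using Finset.card_le_card (Finset.subset_univ T)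
    have himg : (T.image x).card = T.card := Finset.card_image_of_injective T hinj
    have himgsub : T.image x ⊆ base := Finset.image_subset_iff.2 fun i _ => hxb i
    have himgM : (T.image x).card ≤ M := by
      rw [himg]; exact le_trans hTcard (by nlinarith [Nat.le_of_lt hNM])
    have hcount := count_subsets base M (T.image x) himgsub himgM
    rw [himg] at hcount
    calc (∑ S ∈ base.powersetCard M,
          (a * Mi) ^ T.card * (if T.image x ⊆ S then 1 else 0) * (b * Ki) ^ (N - T.card))
        = ((a * Mi) ^ T.card * (b * Ki) ^ (N - T.card)) *
            ∑ S ∈ base.powersetCard M, (if T.image x ⊆ S then 1 else 0) := by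
          rw [Finset.mul_sum]; refine Finset.sum_congr rfl fun S _ => by ring
      _ = ((a * Mi) ^ T.card * (b * Ki) ^ (N - T.card)) *
            (((base.powersetCard M).filter (fun S => T.image x ⊆ S)).card : ℝ≥0∞) := by
          congr 1
          rw [Finset.sum_boole]
      _ = _ := by rw [hcount]; ring
  rw [hRHS, hlhs, Finset.mul_sum]
  refine Finset.sum_le_sum fun T hT => ?_
  have hTcard : T.card ≤ N := by simpa using Finset.card_le_card (Finset.subset_univ T)
  have hscal := scalarIneq K M N T.card hTcard hNM hMK
  calc ENNReal.ofReal (1 - (N:ℝ)^2 / M) * ((K.choose M : ℕ) : ℝ≥0∞)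
        * ((a * Ki) ^ T.card * (b * Ki) ^ (N - T.card))
      = (a ^ T.card * (b * Ki) ^ (N - T.card)) *
          (ENNReal.ofReal (1 - (N:ℝ)^2 / M) * ((K.choose M : ℕ) : ℝ≥0∞) * Ki ^ T.card) := by
        rw [mul_pow]; ring
    _ ≤ (a ^ T.card * (b * Ki) ^ (N - T.card)) *
          (Mi ^ T.card * ((K - T.card).choose (M - T.card) : ℝ≥0∞)) :=
        mul_le_mul_right hscal _
    _ = (a * Mi) ^ T.card * ((K - T.card).choose (M - T.card) : ℝ≥0∞) * (b * Ki) ^ (N - T.card) := by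
        rw [mul_pow]; ring

lemma tsum_singleton_meas {ι : Type*} [Countable ι] [MeasurableSpace ι]
    [MeasurableSingletonClass ι] (ν : Measure ι) (s : Set ι) :
    ∑' x : s, ν {(x : ι)} = ν s := by
  rw [← measure_iUnion (fun i j hij => by
      simpa [Function.onFun] using Subtype.val_injective.ne hij)
    (fun i => measurableSet_singleton _)]
  congr 1
  ext y
  simp

lemma pi_pmf_singleton {X : Type*} [Countable X] [MeasurableSpace X] [MeasurableSingletonClass X]
    {N : ℕ} (P : PMF X) (x : Fin N → X) :
    (Measure.pi fun _ : Fin N => P.toMeasure) {x} = ∏ i, P (x i) := by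
  rw [← Set.univ_pi_singleton x, Measure.pi_pi]
  exact Finset.prod_congr rfl fun i _ =>
    PMF.toMeasure_apply_singleton _ _ (measurableSet_singleton _)

/-- Infinite-alphabet impossibility: any α-error Type-2 detector over
P = {(P₀,P_b) : TV(P₀,P_b) ≥ 1-β} on a countably infinite alphabet has α = ½,
i.e., cannot beat random guessing. -/
theorem stmt14 {X Ω : Type*} [Countable X] [Infinite X]
    [MeasurableSpace X] [MeasurableSingletonClass X]
    [MeasurableSpace Ω] (μΩ : Measure Ω) [IsProbabilityMeasure μΩ]
    (N : ℕ) (γ β α : ℝ) (hγ0 : 0 < γ) (hγ1 : γ ≤ 1) (hβ0 : 0 < β) (hβ1 : β ≤ 1)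
    (hα : α ≤ 1 / 2)
    (g : (Fin N → X) → PMF X → Ω → Bool)
    (hdet : ∀ P₀ Pb P₁ : PMF X,
      (∀ x, P₁ x = ENNReal.ofReal γ * Pb x + ENNReal.ofReal (1 - γ) * P₀ x) →
      1 - β ≤ tvPMF P₀ Pb →
      1 / 2 * (((Measure.pi fun _ : Fin N => P₁.toMeasure).prod μΩ)
          {q | g q.1 P₀ q.2 = false}).toReal +
      1 / 2 * (((Measure.pi fun _ : Fin N => P₀.toMeasure).prod μΩ)
          {q | g q.1 P₀ q.2 = true}).toReal ≤ α) :
    α = 1 / 2 := by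
  classical
  -- It suffices to show α ≥ 1/2 - ε for every ε > 0
  have main : ∀ ε : ℝ, 0 < ε → 1 / 2 - ε ≤ α := by
    intro ε hε
    -- choose parameters
    set M : ℕ := N * N + 1 + ⌈(N:ℝ) * N / ε⌉₊ with hMdef
    have hNM : N * N < M := by omega
    have hM0 : 0 < M := by omega
    set K : ℕ := max M ⌈(M:ℝ) / β⌉₊ with hKdef
    have hMK : M ≤ K := le_max_left _ _
    have hK0 : 0 < K := lt_of_lt_of_le hM0 hMK
    have hMR : (0:ℝ) < M := by exact_mod_cast hM0
    have hKR : (0:ℝ) < K := by exact_mod_cast hK0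
    have hβK : (M:ℝ) ≤ β * K := by
      have h1 : (M:ℝ) / β ≤ (⌈(M:ℝ) / β⌉₊ : ℝ) := Nat.le_ceil _
      have h2 : ((⌈(M:ℝ) / β⌉₊ : ℕ) : ℝ) ≤ (K:ℝ) := by
        exact_mod_cast Nat.cast_le.2 (le_max_right M ⌈(M:ℝ) / β⌉₊)
      have := le_trans h1 h2
      rw [div_le_iff₀ hβ0] at this
      linarith [this]
    -- error terms
    set δ : ℝ := (N:ℝ)^2 / M with hδdef
    have hδ0 : 0 ≤ δ := by positivity
    have hδε : δ ≤ ε := by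
      rw [hδdef, div_le_iff₀ hMR]
      have h1 : (N:ℝ) * N / ε ≤ (⌈(N:ℝ) * N / ε⌉₊ : ℝ) := Nat.le_ceil _
      have h2 : (⌈(N:ℝ) * N / ε⌉₊ : ℝ) ≤ (M:ℝ) := by
        have : ⌈(N:ℝ) * N / ε⌉₊ ≤ M := by omega
        exact_mod_cast this
      have h3 : (N:ℝ) * N / ε ≤ (M:ℝ) := le_trans h1 h2
      rw [div_le_iff₀ hε] at h3
      nlinarith [h3]
    have hδ1 : δ ≤ 1 := by
      rw [hδdef, div_le_one hMR]
      have : ((N*N : ℕ) : ℝ) ≤ (M:ℝ) := by exact_mod_cast Nat.le_of_lt hNM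
      push_cast at this
      nlinarith [this]
    set κ : ℝ := (N:ℝ) * N / K with hκdef
    have hκ0 : 0 ≤ κ := by positivity
    have hκε : κ ≤ ε := by
      have hKM : (M:ℝ) ≤ K := by exact_mod_cast hMK
      have : κ ≤ δ := by
        rw [hκdef, hδdef]
        rw [div_le_div_iff₀ hKR hMR]
        nlinarith [hKM, Nat.cast_nonneg (α := ℝ) N]
      linarith [this, hδε]
    -- the base finite set
    set base : Finset X := (Finset.range K).map (Infinite.natEmbedding X) with hbase
    have hbcard : base.card = K := by rw [hbase, Finset.card_map, Finset.card_range]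
    have hbne : base.Nonempty := Finset.card_pos.1 (by rw [hbcard]; exact hK0)
    set P₀ : PMF X := PMF.uniformOfFinset base hbne with hP₀
    set Ki : ℝ≥0∞ := ((K : ℝ≥0∞))⁻¹ with hKi
    have hP₀le : ∀ v, P₀ v ≤ Ki := by
      intro v
      rw [hP₀, PMF.uniformOfFinset_apply, hbcard]
      split <;> simp [hKi]
    set 𝒮 := base.powersetCard M with h𝒮
    set CC : ℕ := K.choose M with hCC
    have hcard𝒮 : 𝒮.card = CC := by rw [h𝒮, Finset.card_powersetCard, hbcard]
    have hCC0 : 0 < CC := Nat.choose_pos hMK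
    have hCCR : (0:ℝ) < CC := by exact_mod_cast hCC0
    -- PMFs for each subset
    have hSprop : ∀ S : {S // S ∈ 𝒮}, S.1 ⊆ base ∧ S.1.card = M := fun S =>
      Finset.mem_powersetCard.1 S.2
    have hSne : ∀ S : {S // S ∈ 𝒮}, S.1.Nonempty := fun S =>
      Finset.card_pos.1 (by rw [(hSprop S).2]; exact hM0)
    set Pb : {S // S ∈ 𝒮} → PMF X := fun S => PMF.uniformOfFinset S.1 (hSne S) with hPb
    set P₁ : {S // S ∈ 𝒮} → PMF X := fun S =>
      ⟨fun y => ENNReal.ofReal γ * Pb S y + ENNReal.ofReal (1 - γ) * P₀ y, by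
        have hts : ∑' y, (ENNReal.ofReal γ * Pb S y + ENNReal.ofReal (1 - γ) * P₀ y) = 1 := by
          rw [ENNReal.tsum_add, ENNReal.tsum_mul_left, ENNReal.tsum_mul_left, PMF.tsum_coe,
            PMF.tsum_coe, mul_one, mul_one,
            ← ENNReal.ofReal_add hγ0.le (by linarith : (0:ℝ) ≤ 1 - γ)]
          norm_num
        rw [← hts]
        exact ENNReal.summable.hasSum⟩ with hP₁
    have hP₁app : ∀ (S : {S // S ∈ 𝒮}) y,
        P₁ S y = ENNReal.ofReal γ * Pb S y + ENNReal.ofReal (1 - γ) * P₀ y := fun S y => rfl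
    -- TV condition
    have htv : ∀ S : {S // S ∈ 𝒮}, 1 - β ≤ tvPMF P₀ (Pb S) := by
      intro S
      rw [hP₀, hPb, tv_unif base S.1 (hSprop S).1 (hSne S) hbne, (hSprop S).2, hbcard]
      have : (M:ℝ) / K ≤ β := by rw [div_le_iff₀ hKR]; nlinarith [hβK]
      linarith
    -- notation for measures and error sets
    set ν₀ : Measure (Fin N → X) := Measure.pi fun _ : Fin N => P₀.toMeasure with hν₀
    set νS : {S // S ∈ 𝒮} → Measure (Fin N → X) :=
      fun S => Measure.pi fun _ : Fin N => (P₁ S).toMeasure with hνS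
    set B : (Fin N → X) → Set Ω := fun x => {ω | g x P₀ ω = false} with hB
    have hA₀ : {q : (Fin N → X) × Ω | g q.1 P₀ q.2 = false} = ⋃ x, ({x} : Set (Fin N → X)) ×ˢ B x := by
      ext ⟨x, ω⟩
      simp only [Set.mem_setOf_eq, Set.mem_iUnion, Set.mem_prod, Set.mem_singleton_iff, hB]
      constructor
      · intro h; exact ⟨x, rfl, h⟩
      · rintro ⟨y, rfl, h⟩; exact h
    have hA₁ : {q : (Fin N → X) × Ω | g q.1 P₀ q.2 = true} = ⋃ x, ({x} : Set (Fin N → X)) ×ˢ (B x)ᶜ := by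
      ext ⟨x, ω⟩
      simp only [Set.mem_setOf_eq, Set.mem_iUnion, Set.mem_prod, Set.mem_singleton_iff, hB,
        Set.mem_compl_iff, Bool.not_eq_false]
      constructor
      · intro h; exact ⟨x, rfl, h⟩
      · rintro ⟨y, rfl, h⟩; exact h
    set a₀ : ℝ≥0∞ := ((ν₀.prod μΩ) {q | g q.1 P₀ q.2 = false}) with ha₀
    set b₀ : ℝ≥0∞ := ((ν₀.prod μΩ) {q | g q.1 P₀ q.2 = true}) with hb₀
    set eS : {S // S ∈ 𝒮} → ℝ≥0∞ := fun S => ((νS S).prod μΩ) {q | g q.1 P₀ q.2 = false} with heS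
    -- from hdet
    have hdetS : ∀ S : {S // S ∈ 𝒮},
        1 / 2 * (eS S).toReal + 1 / 2 * b₀.toReal ≤ α := by
      intro S
      exact hdet P₀ (Pb S) (P₁ S) (hP₁app S) (htv S)
    -- per-singleton bound
    set D' : Set (Fin N → X) := {x | Function.Injective x} with hD'
    have hx_bound : ∀ x : Fin N → X, Function.Injective x →
        ENNReal.ofReal (1 - δ) * (CC : ℝ≥0∞) * ν₀ {x} ≤ ∑ S ∈ 𝒮.attach, νS S {x} := by
      intro x hinj
      by_cases hall : ∀ i, x i ∈ base
      · have h1 : ν₀ {x} = Ki ^ N := by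
          rw [hν₀, pi_pmf_singleton]
          have hv : ∀ i : Fin N, P₀ (x i) = Ki := by
            intro i
            rw [hP₀, PMF.uniformOfFinset_apply, if_pos (hall i), hbcard, hKi]
          rw [Finset.prod_congr rfl fun i _ => hv i, Finset.prod_const, Finset.card_univ,
            Fintype.card_fin]
        have h2 : ∀ S : {S // S ∈ 𝒮}, νS S {x}
            = ∏ i : Fin N, (ENNReal.ofReal γ * (if x i ∈ S.1 then ((M:ℝ≥0∞))⁻¹ else 0)
              + ENNReal.ofReal (1 - γ) * Ki) := by
          intro S
          rw [hνS, pi_pmf_singleton]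
          refine Finset.prod_congr rfl fun i _ => ?_
          rw [hP₁app S (x i)]
          congr 1
          · congr 1
            rw [hPb]
            rw [PMF.uniformOfFinset_apply, (hSprop S).2]
          · congr 1
            rw [hP₀, PMF.uniformOfFinset_apply, if_pos (hall i), hbcard, hKi]
        calc ENNReal.ofReal (1 - δ) * (CC : ℝ≥0∞) * ν₀ {x}
            = ENNReal.ofReal (1 - (N:ℝ)^2 / M) * ((base.card.choose M : ℕ) : ℝ≥0∞)
              * ((base.card : ℝ≥0∞))⁻¹ ^ N := by
              rw [h1, hδdef, hCC, hbcard, hKi]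
          _ ≤ ∑ S ∈ 𝒮.attach,
              ∏ i : Fin N, (ENNReal.ofReal γ * (if x i ∈ S.1 then ((M:ℝ≥0∞))⁻¹ else 0)
                + ENNReal.ofReal (1 - γ) * ((base.card : ℝ≥0∞))⁻¹) :=
              key_sum γ hγ0.le hγ1 base M N hNM (by rw [hbcard]; exact hMK) x hinj hall
          _ = ∑ S ∈ 𝒮.attach, νS S {x} := by
              refine Finset.sum_congr rfl fun S _ => ?_
              rw [h2 S]
              refine Finset.prod_congr rfl fun i _ => ?_
              rw [hbcard, hKi]
      · push_neg at hall
        obtain ⟨i, hi⟩ := hall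
        have h0 : ν₀ {x} = 0 := by
          rw [hν₀, pi_pmf_singleton]
          refine Finset.prod_eq_zero (Finset.mem_univ i) ?_
          rw [hP₀, PMF.uniformOfFinset_apply, if_neg hi]
        rw [h0, mul_zero]
        exact zero_le
    -- the main ENNReal chain
    set W : ℝ≥0∞ := ∑' x : D', ν₀ {(x : Fin N → X)} * μΩ (B x) with hW
    have hWle : W ≤ 1 := by
      calc W ≤ ∑' x : D', ν₀ {(x : Fin N → X)} := by
            refine ENNReal.tsum_le_tsum fun x => ?_
            exact mul_le_of_le_one_right (zero_le) prob_le_one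
        _ = ν₀ D' := tsum_singleton_meas ν₀ D'
        _ ≤ 1 := prob_le_one
    have hchain : ENNReal.ofReal (1 - δ) * (CC : ℝ≥0∞) * W ≤ ∑ S ∈ 𝒮.attach, eS S := by
      have step1 : ∀ S : {S // S ∈ 𝒮}, ∑' x, νS S {x} * μΩ (B x) ≤ eS S := by
        intro S
        rw [heS, hA₀]
        exact slice_ge (νS S) μΩ B
      calc ENNReal.ofReal (1 - δ) * (CC : ℝ≥0∞) * W
          = ∑' x : D', ENNReal.ofReal (1 - δ) * (CC : ℝ≥0∞) * ν₀ {(x : Fin N → X)} * μΩ (B x) := by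
            rw [hW, ← ENNReal.tsum_mul_left]
            exact tsum_congr fun x => by ring
        _ ≤ ∑' x : D', (∑ S ∈ 𝒮.attach, νS S {(x : Fin N → X)}) * μΩ (B x) := by
            refine ENNReal.tsum_le_tsum fun x => ?_
            exact mul_le_mul_left (hx_bound x x.2) _
        _ ≤ ∑' x : Fin N → X, (∑ S ∈ 𝒮.attach, νS S {x}) * μΩ (B x) := by
            exact Summable.tsum_le_tsum_of_inj Subtype.val Subtype.val_injective
              (fun _ _ => zero_le) (fun _ => le_rfl) ENNReal.summable ENNReal.summable
        _ = ∑ S ∈ 𝒮.attach, ∑' x : Fin N → X, νS S {x} * μΩ (B x) := by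
            rw [← Summable.tsum_finsetSum (fun S _ => ENNReal.summable)]
            exact tsum_congr fun x => by rw [Finset.sum_mul]
        _ ≤ ∑ S ∈ 𝒮.attach, eS S := Finset.sum_le_sum fun S _ => step1 S
    have hcol : ν₀ D'ᶜ ≤ (N : ℝ≥0∞) * N * Ki := by
      have : D'ᶜ = {x : Fin N → X | ¬ Function.Injective x} := by
        rw [hD']; ext x; simp
      rw [this, hν₀]
      exact collision_bound N P₀ Ki hP₀le
    have ha₀le : a₀ ≤ W + (N : ℝ≥0∞) * N * Ki := by
      calc a₀ ≤ ∑' x, ν₀ {x} * μΩ (B x) := by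
            rw [ha₀, hA₀]; exact slice_le ν₀ μΩ B
        _ = W + ∑' x : ↥D'ᶜ, ν₀ {(x : Fin N → X)} * μΩ (B x) := by
            rw [hW, ← Summable.tsum_add_tsum_compl (s := D') ENNReal.summable ENNReal.summable]
        _ ≤ W + (N : ℝ≥0∞) * N * Ki := by
            gcongr
            calc ∑' x : ↥D'ᶜ, ν₀ {(x : Fin N → X)} * μΩ (B x)
                ≤ ∑' x : ↥D'ᶜ, ν₀ {(x : Fin N → X)} :=
                  ENNReal.tsum_le_tsum fun x => mul_le_of_le_one_right (zero_le) prob_le_one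
              _ = ν₀ D'ᶜ := tsum_singleton_meas ν₀ D'ᶜ
              _ ≤ (N : ℝ≥0∞) * N * Ki := hcol
    have hab1 : (1 : ℝ≥0∞) ≤ a₀ + b₀ := by
      have h1 : ∑' x, ν₀ {x} * μΩ (B x) ≤ a₀ := by rw [ha₀, hA₀]; exact slice_ge ν₀ μΩ B
      have h2 : ∑' x, ν₀ {x} * μΩ (B x)ᶜ ≤ b₀ := by
        rw [hb₀, hA₁]; exact slice_ge ν₀ μΩ (fun x => (B x)ᶜ)
      calc (1 : ℝ≥0∞) = ν₀ Set.univ := (measure_univ).symm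
        _ = ν₀ (⋃ x : Fin N → X, {x}) := by rw [Set.iUnion_of_singleton]
        _ ≤ ∑' x, ν₀ {x} := measure_iUnion_le _
        _ ≤ ∑' x, ν₀ {x} * (μΩ (B x) + μΩ (B x)ᶜ) := by
            refine ENNReal.tsum_le_tsum fun x => ?_
            conv_lhs => rw [← mul_one (ν₀ {x})]
            refine mul_le_mul_right ?_ _
            calc (1:ℝ≥0∞) = μΩ Set.univ := measure_univ.symm
              _ = μΩ (B x ∪ (B x)ᶜ) := by rw [Set.union_compl_self]
              _ ≤ μΩ (B x) + μΩ (B x)ᶜ := measure_union_le _ _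
        _ = (∑' x, ν₀ {x} * μΩ (B x)) + ∑' x, ν₀ {x} * μΩ (B x)ᶜ := by
            rw [← ENNReal.tsum_add]
            exact tsum_congr fun x => by ring
        _ ≤ a₀ + b₀ := add_le_add h1 h2
    -- convert to reals
    have ha₀ne : a₀ ≠ ⊤ := (lt_of_le_of_lt prob_le_one ENNReal.one_lt_top).ne
    have hb₀ne : b₀ ≠ ⊤ := (lt_of_le_of_lt prob_le_one ENNReal.one_lt_top).ne
    have hWne : W ≠ ⊤ := (lt_of_le_of_lt hWle ENNReal.one_lt_top).ne
    have hKine : (N : ℝ≥0∞) * N * Ki ≠ ⊤ := by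
      refine ENNReal.mul_ne_top (ENNReal.mul_ne_top (ENNReal.natCast_ne_top N) (ENNReal.natCast_ne_top N)) ?_
      rw [hKi]
      exact ENNReal.inv_ne_top.2 (by exact_mod_cast hK0.ne')
    set aR := a₀.toReal with haR
    set bR := b₀.toReal with hbR
    set WR := W.toReal with hWR
    have hWR0 : 0 ≤ WR := ENNReal.toReal_nonneg
    have hWR1 : WR ≤ 1 := by
      rw [hWR, ← ENNReal.toReal_one]
      exact ENNReal.toReal_mono ENNReal.one_ne_top hWle
    have haR1 : aR ≤ 1 := by
      rw [haR, ← ENNReal.toReal_one]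
      exact ENNReal.toReal_mono ENNReal.one_ne_top prob_le_one
    have haR0 : 0 ≤ aR := ENNReal.toReal_nonneg
    have hbR0 : 0 ≤ bR := ENNReal.toReal_nonneg
    have hκtoReal : ((N : ℝ≥0∞) * N * Ki).toReal = κ := by
      rw [ENNReal.toReal_mul, ENNReal.toReal_mul, hKi, ENNReal.toReal_inv]
      simp [hκdef, div_eq_mul_inv]
    have haRle : aR ≤ WR + κ := by
      rw [haR, hWR, ← hκtoReal, ← ENNReal.toReal_add hWne hKine]
      exact ENNReal.toReal_mono (ENNReal.add_ne_top.2 ⟨hWne, hKine⟩) ha₀le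
    have habR : 1 ≤ aR + bR := by
      rw [haR, hbR, ← ENNReal.toReal_add ha₀ne hb₀ne, ← ENNReal.toReal_one]
      exact ENNReal.toReal_mono (ENNReal.add_ne_top.2 ⟨ha₀ne, hb₀ne⟩) hab1
    -- sum over S of hdet inequalities
    have hsum : ∑ S ∈ 𝒮.attach, (1 / 2 * (eS S).toReal + 1 / 2 * bR) ≤ (CC:ℝ) * α := by
      calc ∑ S ∈ 𝒮.attach, (1 / 2 * (eS S).toReal + 1 / 2 * bR)
          ≤ ∑ _S ∈ 𝒮.attach, α := Finset.sum_le_sum fun S _ => hdetS S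
        _ = (CC:ℝ) * α := by
            rw [Finset.sum_const, Finset.card_attach, hcard𝒮, nsmul_eq_mul]
    have hsum_split : ∑ S ∈ 𝒮.attach, (1 / 2 * (eS S).toReal + 1 / 2 * bR)
        = 1 / 2 * (∑ S ∈ 𝒮.attach, (eS S).toReal) + (CC:ℝ) * (1 / 2 * bR) := by
      rw [Finset.sum_add_distrib, ← Finset.mul_sum, Finset.sum_const, Finset.card_attach,
        hcard𝒮, nsmul_eq_mul]
    have heSne : ∀ S : {S // S ∈ 𝒮}, eS S ≠ ⊤ :=
      fun S => (lt_of_le_of_lt prob_le_one ENNReal.one_lt_top).ne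
    have hsumeS_ne : (∑ S ∈ 𝒮.attach, eS S) ≠ ⊤ := by
      have hle : (∑ S ∈ 𝒮.attach, eS S) ≤ (𝒮.attach.card : ℝ≥0∞) := by
        calc (∑ S ∈ 𝒮.attach, eS S) ≤ ∑ _S ∈ 𝒮.attach, 1 :=
            Finset.sum_le_sum fun S _ => prob_le_one
          _ = (𝒮.attach.card : ℝ≥0∞) := by rw [Finset.sum_const, nsmul_eq_mul, mul_one]
      exact (lt_of_le_of_lt hle (ENNReal.natCast_lt_top _)).ne
    have heSsum : (1 - δ) * (CC:ℝ) * WR ≤ ∑ S ∈ 𝒮.attach, (eS S).toReal := by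
      have h1 : (ENNReal.ofReal (1 - δ) * (CC : ℝ≥0∞) * W).toReal = (1 - δ) * (CC:ℝ) * WR := by
        rw [ENNReal.toReal_mul, ENNReal.toReal_mul, ENNReal.toReal_ofReal (by linarith),
          ENNReal.toReal_natCast, hWR]
      have h2 : (∑ S ∈ 𝒮.attach, eS S).toReal = ∑ S ∈ 𝒮.attach, (eS S).toReal :=
        ENNReal.toReal_sum fun S _ => heSne S
      rw [← h1, ← h2]
      exact ENNReal.toReal_mono hsumeS_ne hchain
    -- final arithmetic
    have hfinal : (CC:ℝ) * (1 / 2 * ((1 - δ) * WR) + 1 / 2 * bR) ≤ (CC:ℝ) * α := by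
      calc (CC:ℝ) * (1 / 2 * ((1 - δ) * WR) + 1 / 2 * bR)
          = 1 / 2 * ((1 - δ) * (CC:ℝ) * WR) + (CC:ℝ) * (1 / 2 * bR) := by ring
        _ ≤ 1 / 2 * (∑ S ∈ 𝒮.attach, (eS S).toReal) + (CC:ℝ) * (1 / 2 * bR) := by
            have := heSsum
            nlinarith [this]
        _ = ∑ S ∈ 𝒮.attach, (1 / 2 * (eS S).toReal + 1 / 2 * bR) := hsum_split.symm
        _ ≤ (CC:ℝ) * α := hsum
    have hq : 1 / 2 * ((1 - δ) * WR) + 1 / 2 * bR ≤ α :=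
      le_of_mul_le_mul_left (by linarith [hfinal]) hCCR
    nlinarith [hq, habR, haRle, hδε, hκε, hδ0, hκ0, hWR0, hWR1, haR1, haR0, hbR0,
      mul_nonneg hδ0 hWR0, mul_le_of_le_one_right hδ0 hWR1]
  -- conclude
  by_contra hne
  have hlt : α < 1 / 2 := lt_of_le_of_ne hα hne
  have := main ((1 / 2 - α) / 2) (by linarith)
  linarith
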